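/- Let h : [t₀,∞) → ℝ be r-times continuously differentiable and suppose h^{(r)}(t) + κ_{r−1}h^{(r−1)}(t) + ⋯ + κ₁h'(t) + κ₀h(t) ≥ 0 for all t ≥ t₀, where the polynomial s^r + κ_{r−1}s^{r−1} + ⋯ + κ₀ factors as ∏_{q=1}^{r}(s + c_q) with all c_q > 0. Define ψ₀ := h and ψ_q := ψ_{q−1}' + c_q ψ_{q−1} for q = 1,…,r. If ψ_q(t₀) ≥ 0 for q = 0,…,r−1, then h(t) ≥ 0 for all t ≥ t₀. -/

import Mathlib

/-- The cascade functions `ψ₀ := h`, `ψ_q := ψ_{q−1}' + c_{q} ψ_{q−1}`. -/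
noncomputable def psiCascade (c : ℕ → ℝ) (h : ℝ → ℝ) : ℕ → ℝ → ℝ
  | 0 => h
  | q + 1 => fun t => deriv (psiCascade c h q) t + c q * psiCascade c h q t

open Polynomial Finset

/-- Scalar Grönwall-type lemma. -/
lemma gron_scalar (t₀ cc : ℝ) (ψ : ℝ → ℝ)
    (hd : Differentiable ℝ ψ) (h0 : 0 ≤ ψ t₀)
    (hineq : ∀ t, t₀ ≤ t → 0 ≤ deriv ψ t + cc * ψ t) :
    ∀ t, t₀ ≤ t → 0 ≤ ψ t := by
  intro t ht
  set g : ℝ → ℝ := fun s => Real.exp (cc * s) * ψ s with hg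
  have hder : ∀ s, HasDerivAt g (Real.exp (cc * s) * (deriv ψ s + cc * ψ s)) s := by
    intro s
    have h1 : HasDerivAt (fun s : ℝ => Real.exp (cc * s)) (Real.exp (cc * s) * cc) s := by
      simpa using ((hasDerivAt_id s).const_mul cc).exp
    have h2 := h1.mul (hd s).hasDerivAt
    exact h2.congr_deriv (by ring)
  have hge : Differentiable ℝ g := fun s => (hder s).differentiableAt
  have hmono : MonotoneOn g (Set.Ici t₀) := by
    apply monotoneOn_of_deriv_nonneg (convex_Ici t₀) hge.continuous.continuousOn
      (fun x _ => (hge x).differentiableWithinAt)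
    intro x hx
    rw [interior_Ici] at hx
    rw [(hder x).deriv]
    exact mul_nonneg (Real.exp_pos _).le (hineq x hx.le)
  have h1 : g t₀ ≤ g t := hmono Set.self_mem_Ici (Set.mem_Ici.2 ht) ht
  have h2 : 0 ≤ g t := le_trans (mul_nonneg (Real.exp_pos _).le h0) h1
  have h3 : (0:ℝ) < Real.exp (cc * t) := Real.exp_pos _
  simp only [hg] at h2
  nlinarith [h2, h3]

lemma psi_smooth (r : ℕ) (c : ℕ → ℝ) (h : ℝ → ℝ) (hsm : ContDiff ℝ (r : ℕ∞) h) :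
    ∀ q ≤ r, ContDiff ℝ ((r - q : ℕ) : ℕ∞) (psiCascade c h q) := by
  intro q
  induction q with
  | zero => intro _; simpa [psiCascade] using hsm
  | succ q ih =>
    intro hq
    have hq' : q ≤ r := Nat.le_of_succ_le hq
    have ihq := ih hq'
    have hrq : r - q = (r - (q + 1)) + 1 := by omega
    rw [hrq] at ihq
    have ihq' : ContDiff ℝ (((r - (q+1) : ℕ) : ℕ∞) + 1) (psiCascade c h q) := by
      exact_mod_cast ihq
    rw [contDiff_succ_iff_deriv] at ihq'
    have hd := ihq'.2.2
    have hψ : ContDiff ℝ ((r - (q+1) : ℕ) : ℕ∞) (psiCascade c h q) :=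
      ihq.of_le (by exact_mod_cast Nat.le_succ (r - (q+1)))
    show ContDiff ℝ _ (fun t => deriv (psiCascade c h q) t + c q * psiCascade c h q t)
    exact hd.add (contDiff_const.mul hψ)

lemma psi_rep (r : ℕ) (c : ℕ → ℝ) (h : ℝ → ℝ) (hsm : ContDiff ℝ (r : ℕ∞) h) :
    ∀ q ≤ r, ∀ t, psiCascade c h q t
      = ∑ i ∈ Finset.range (q+1),
          (∏ j ∈ Finset.range q, (X + C (c j))).coeff i * iteratedDeriv i h t := by
  intro q
  induction q with
  | zero => intro _ t; simp [psiCascade]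
  | succ q ih =>
    intro hq t
    have hq' : q ≤ r := Nat.le_of_succ_le hq
    have hrep := ih hq'
    set A : Polynomial ℝ := ∏ j ∈ Finset.range q, (X + C (c j)) with hA
    have hdiff : ∀ i ∈ Finset.range (q+1), Differentiable ℝ (iteratedDeriv i h) := by
      intro i hi
      rw [Finset.mem_range] at hi
      exact hsm.differentiable_iteratedDeriv i (by exact_mod_cast Nat.lt_of_lt_of_le hi hq)
    have hfun : psiCascade c h q
        = fun t => ∑ i ∈ Finset.range (q+1), A.coeff i * iteratedDeriv i h t :=
      funext hrep
    have hderiv : deriv (psiCascade c h q) t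
        = ∑ i ∈ Finset.range (q+1), A.coeff i * iteratedDeriv (i+1) h t := by
      rw [hfun, deriv_fun_sum (fun i hi => ((hdiff i hi) t).const_mul _)]
      refine Finset.sum_congr rfl fun i hi => ?_
      rw [deriv_const_mul _ ((hdiff i hi) t), ← iteratedDeriv_succ]
    have hA1 : A.coeff (q+1) = 0 := by
      apply coeff_eq_zero_of_natDegree_lt
      calc A.natDegree ≤ ∑ j ∈ Finset.range q, (X + C (c j)).natDegree :=
            natDegree_prod_le _ _
        _ ≤ q := by simp [natDegree_X_add_C]
        _ < q + 1 := Nat.lt_succ_self q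
    show deriv (psiCascade c h q) t + c q * psiCascade c h q t = _
    rw [hderiv, hrep t, Finset.prod_range_succ, ← hA]
    have e1 : ∑ i ∈ Finset.range (q+1+1), (A * X).coeff i * iteratedDeriv i h t
        = ∑ i ∈ Finset.range (q+1), A.coeff i * iteratedDeriv (i+1) h t := by
      rw [Finset.sum_range_succ']
      simp [coeff_mul_X]
    have e2 : ∑ i ∈ Finset.range (q+1+1), (A * C (c q)).coeff i * iteratedDeriv i h t
        = c q * ∑ i ∈ Finset.range (q+1), A.coeff i * iteratedDeriv i h t := by
      rw [Finset.sum_range_succ, Finset.mul_sum]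
      simp only [coeff_mul_C, hA1, zero_mul, add_zero]
      exact Finset.sum_congr rfl fun i _ => by ring
    have hsplit : ∀ i, (A * (X + C (c q))).coeff i
        = (A * X).coeff i + (A * C (c q)).coeff i := fun i => by
      rw [mul_add, coeff_add]
    simp only [hsplit, add_mul, Finset.sum_add_distrib, e1, e2]

/-- eCBF comparison lemma for relative degree `r`: a linear differential inequality
whose characteristic polynomial factors as `∏ (s + c_q)` with `c_q > 0`, together
with nonnegativity of the cascade functions at `t₀`, implies `h ≥ 0` on `[t₀, ∞)`. -/
theorem ecbf_comparison (t₀ : ℝ) (r : ℕ) (h : ℝ → ℝ) (hsm : ContDiff ℝ (r : ℕ∞) h)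
    (κ c : ℕ → ℝ) (hc : ∀ q < r, 0 < c q)
    (hfact : (Polynomial.X ^ r
        + ∑ q ∈ Finset.range r, Polynomial.C (κ q) * Polynomial.X ^ q : Polynomial ℝ)
      = ∏ q ∈ Finset.range r, (Polynomial.X + Polynomial.C (c q)))
    (hineq : ∀ t, t₀ ≤ t →
      0 ≤ iteratedDeriv r h t + ∑ q ∈ Finset.range r, κ q * iteratedDeriv q h t)
    (hinit : ∀ q < r, 0 ≤ psiCascade c h q t₀) :
    ∀ t, t₀ ≤ t → 0 ≤ h t := by
  -- ψ_r ≥ 0 on [t₀, ∞)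
  have hψr : ∀ t, t₀ ≤ t → 0 ≤ psiCascade c h r t := by
    intro t ht
    have hr := psi_rep r c h hsm r le_rfl t
    rw [← hfact] at hr
    have hco : ∀ i < r,
        (X ^ r + ∑ q ∈ Finset.range r, C (κ q) * X ^ q : Polynomial ℝ).coeff i = κ i := by
      intro i hi
      simp only [coeff_add, coeff_X_pow, finset_sum_coeff, coeff_C_mul,
        if_neg (Nat.ne_of_lt hi)]
      rw [Finset.sum_eq_single i]
      · simp
      · intro b _ hb
        simp [Ne.symm hb]
      · intro hb
        exact absurd (Finset.mem_range.mpr hi) hb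
    have hcr : (X ^ r + ∑ q ∈ Finset.range r, C (κ q) * X ^ q : Polynomial ℝ).coeff r = 1 := by
      rw [coeff_add, coeff_X_pow, if_pos rfl, finset_sum_coeff]
      simp only [coeff_C_mul, coeff_X_pow]
      rw [Finset.sum_eq_zero (fun b hb => by
        rw [Finset.mem_range] at hb
        rw [if_neg (show ¬r = b by omega), mul_zero])]
      ring
    rw [hr, Finset.sum_range_succ, hcr, one_mul]
    have : ∑ i ∈ Finset.range r,
        (X ^ r + ∑ q ∈ Finset.range r, C (κ q) * X ^ q : Polynomial ℝ).coeff i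
          * iteratedDeriv i h t
        = ∑ i ∈ Finset.range r, κ i * iteratedDeriv i h t := by
      refine Finset.sum_congr rfl fun i hi => ?_
      rw [Finset.mem_range] at hi
      rw [hco i hi]
    rw [this]
    have := hineq t ht
    linarith
  -- downward induction
  have hdown : ∀ k, k ≤ r → ∀ t, t₀ ≤ t → 0 ≤ psiCascade c h (r - k) t := by
    intro k
    induction k with
    | zero => simpa using hψr
    | succ k ih =>
      intro hk t ht
      have hk' : k ≤ r := Nat.le_of_succ_le hk
      set q := r - (k+1) with hqdef
      have hqr : q < r := by omega
      have hq1 : q + 1 = r - k := by omega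
      have hψq1 : ∀ s, t₀ ≤ s → 0 ≤ psiCascade c h (q+1) s := by
        rw [hq1]; exact ih hk'
      have hdiffψ : Differentiable ℝ (psiCascade c h q) := by
        have := psi_smooth r c h hsm q (le_of_lt hqr)
        exact this.differentiable (by
          have : 1 ≤ r - q := by omega
          exact_mod_cast (by omega : r - q ≠ 0))
      refine gron_scalar t₀ (c q) (psiCascade c h q) hdiffψ (hinit q hqr) ?_ t ht
      intro s hs
      exact hψq1 s hs
  have := hdown r le_rfl
  simpa [psiCascade] using this
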